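/- The code C̄₁ is affine-invariant: for every u ∈ F_q with u ≠ 0, every v ∈ F_q, and every codeword (c_x)_{x ∈ F_q} of C̄₁, the word (c_{u·x + v})_{x ∈ F_q} obtained by permuting coordinates via the affine map x ↦ u·x + v is again a codeword of C̄₁. -/

import Mathlib

def codeC1 (p l : ℕ) (F : Type) [Field F] [Fintype F] [Algebra (ZMod p) F] :
    Set (F → ZMod p) :=
  {w | ∃ a b c : F, ∃ h : ZMod p, ∀ x : F,
    w x = Algebra.trace (ZMod p) F (a * x ^ (p ^ l + 1) + b * x ^ 2 + c * x) + h}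

theorem stmt_6 (p m l : ℕ) [Fact p.Prime] (hodd : Odd p) (hm : 3 ≤ m) (hl : 1 ≤ l)
    (hml : Nat.gcd m l = 1) (F : Type) [Field F] [Fintype F] [Algebra (ZMod p) F]
    (hF : Fintype.card F = p ^ m) :
    ∀ u v : F, u ≠ 0 → ∀ c ∈ codeC1 p l F, (fun x : F => c (u * x + v)) ∈ codeC1 p l F := by
  haveI : CharP F p := charP_of_injective_algebraMap (algebraMap (ZMod p) F).injective p
  haveI : ExpChar F p := ExpChar.prime (Fact.out)
  intro u v hu w hw
  obtain ⟨a, b, c, h, hc⟩ := hw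
  set T := Algebra.trace (ZMod p) F with hT
  -- the Frobenius x ↦ x^(p^l) as an algebra equivalence
  let e : F ≃ₐ[ZMod p] F := AlgEquiv.ofRingEquiv (f := iterateFrobeniusEquiv F p l)
    (fun r => by
      simp only [iterateFrobeniusEquiv_def, ← map_pow, ZMod.pow_card_pow])
  have key : ∀ y : F, T (y ^ p ^ l) = T y := by
    intro y
    have := Algebra.trace_eq_of_algEquiv e y
    simpa [e, AlgEquiv.ofRingEquiv, iterateFrobeniusEquiv_def, iterateFrobenius_def, hT] using this
  -- choose d with d ^ (p^l) = a * u^(p^l) * v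
  obtain ⟨d, hd⟩ := (iterateFrobeniusEquiv F p l).surjective (a * u ^ p ^ l * v)
  rw [iterateFrobeniusEquiv_def] at hd
  refine ⟨a * u ^ (p ^ l + 1), b * u ^ 2, c * u + 2 * b * u * v + a * u * v ^ p ^ l + d,
    h + T (a * v ^ (p ^ l + 1) + b * v ^ 2 + c * v), fun x => ?_⟩
  simp only [hc]
  symm
  have frob : (u * x + v) ^ p ^ l = u ^ p ^ l * x ^ p ^ l + v ^ p ^ l := by
    rw [add_pow_char_pow, mul_pow]
  have expand : a * (u * x + v) ^ (p ^ l + 1) + b * (u * x + v) ^ 2 + c * (u * x + v)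
      = ((a * u ^ (p ^ l + 1)) * x ^ (p ^ l + 1) + (b * u ^ 2) * x ^ 2
          + (c * u + 2 * b * u * v + a * u * v ^ p ^ l) * x)
        + ((a * u ^ p ^ l * v) * x ^ p ^ l)
        + (a * v ^ (p ^ l + 1) + b * v ^ 2 + c * v) := by
    have h1 : (u * x + v) ^ (p ^ l + 1) = ((u * x + v) ^ p ^ l) * (u * x + v) := by
      rw [pow_succ]
    rw [h1, frob, pow_succ, pow_succ]
    ring
  have t1 : T (d * x) = T ((a * u ^ p ^ l * v) * x ^ p ^ l) := by
    rw [← key (d * x), mul_pow, hd]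
  rw [expand, add_mul (c * u + 2 * b * u * v + a * u * v ^ p ^ l) d x, ← add_assoc]
  simp only [map_add]
  rw [t1]
  simp only [← hT]
  ring
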